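/- Let g ∈ SL(2,ℝ). Then there exists δ > 0 with |Q₀(gm)| ≥ δ for all m ∈ ℤ² \ {0} if and only if there exists ε > 0 with ‖b_t g m‖ ≥ ε for all t ∈ ℝ and all m ∈ ℤ² \ {0}. -/
import Mathlib


/-- The diagonal matrix `b_t = diag(e^t, e^{−t})`. -/
noncomputable def bmat (t : ℝ) : Matrix (Fin 2) (Fin 2) ℝ :=
  !![Real.exp t, 0; 0, Real.exp (-t)]

/-- The Euclidean norm on `ℝ²`. -/
noncomputable def euclNorm2 (y : Fin 2 → ℝ) : ℝ :=
  Real.sqrt (y 0 ^ 2 + y 1 ^ 2)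

lemma bmat_comp (t : ℝ) (g : Matrix (Fin 2) (Fin 2) ℝ) (v : Fin 2 → ℝ) :
    euclNorm2 ((bmat t * g).mulVec v) =
      Real.sqrt ((Real.exp t * g.mulVec v 0) ^ 2 + (Real.exp (-t) * g.mulVec v 1) ^ 2) := by
  rw [← Matrix.mulVec_mulVec]
  unfold euclNorm2 bmat
  simp [Matrix.mulVec, dotProduct, Fin.sum_univ_two]

/-- Mahler duality for binary forms: the values `Q₀(gℤ²)` have a gap at zero iff the
diagonal orbit of the lattice `gℤ²` is bounded away from `0` (i.e. bounded in the space
of unimodular lattices). -/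
theorem stmt14 (g : Matrix (Fin 2) (Fin 2) ℝ) (hg : g.det = 1) :
    (∃ δ : ℝ, 0 < δ ∧ ∀ m : Fin 2 → ℤ, m ≠ 0 →
        δ ≤ |(g.mulVec fun i => (m i : ℝ)) 0 * (g.mulVec fun i => (m i : ℝ)) 1|) ↔
    (∃ ε : ℝ, 0 < ε ∧ ∀ (t : ℝ) (m : Fin 2 → ℤ), m ≠ 0 →
        ε ≤ euclNorm2 ((bmat t * g).mulVec fun i => (m i : ℝ))) := by
  constructor
  · rintro ⟨δ, hδ, h⟩
    refine ⟨Real.sqrt δ, Real.sqrt_pos.mpr hδ, ?_⟩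
    intro t m hm
    rw [bmat_comp]
    set x := (g.mulVec fun i => (m i : ℝ)) 0 with hx
    set y := (g.mulVec fun i => (m i : ℝ)) 1 with hy
    have hxy := h m hm
    apply Real.sqrt_le_sqrt
    have h1 : Real.exp t * Real.exp (-t) = 1 := by
      rw [← Real.exp_add]; simp
    rcases abs_cases (x * y) with ⟨he, _⟩ | ⟨he, _⟩ <;>
      nlinarith [sq_nonneg (Real.exp t * x - Real.exp (-t) * y),
        sq_nonneg (Real.exp t * x + Real.exp (-t) * y)]
  · rintro ⟨ε, hε, h⟩
    refine ⟨ε ^ 2 / 2, by positivity, ?_⟩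
    intro m hm
    set x := (g.mulVec fun i => (m i : ℝ)) 0 with hx
    set y := (g.mulVec fun i => (m i : ℝ)) 1 with hy
    have key : ∀ t : ℝ, ε ≤ Real.sqrt ((Real.exp t * x) ^ 2 + (Real.exp (-t) * y) ^ 2) := by
      intro t
      have := h t m hm
      rwa [bmat_comp] at this
    have keysq : ∀ t : ℝ, ε ^ 2 ≤ (Real.exp t * x) ^ 2 + (Real.exp (-t) * y) ^ 2 := by
      intro t
      have h2 := key t
      have h3 : (0 : ℝ) ≤ (Real.exp t * x) ^ 2 + (Real.exp (-t) * y) ^ 2 := by positivity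
      nlinarith [Real.sq_sqrt h3, Real.sqrt_nonneg ((Real.exp t * x) ^ 2 + (Real.exp (-t) * y) ^ 2)]
    -- not both zero
    have hmR : (fun i => (m i : ℝ)) ≠ 0 := by
      intro h0
      apply hm
      funext i
      have : (m i : ℝ) = 0 := by simpa using congrFun h0 i
      exact_mod_cast this
    have hinv : Invertible g := g.invertibleOfIsUnitDet (by simp [hg])
    have hne : ¬(x = 0 ∧ y = 0) := by
      rintro ⟨hx0, hy0⟩
      have hgm : g.mulVec (fun i => (m i : ℝ)) = 0 := by
        funext i
        fin_cases i
        · exact hx0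
        · exact hy0
      have h0 : g.mulVec (fun i => (m i : ℝ)) = g.mulVec 0 := by
        rw [hgm]; simp
      exact hmR (g.mulVec_injective_of_invertible h0)
    have hx0 : x ≠ 0 := by
      intro hx0
      have hy0 : y ≠ 0 := fun hy0 => hne ⟨hx0, hy0⟩
      set u : ℝ := ε / (2 * |y|) with hu
      have hupos : 0 < u := by positivity
      have := keysq (-Real.log u)
      rw [hx0] at this
      have heu : Real.exp (- -Real.log u) = u := by simp [Real.exp_log hupos]
      rw [heu] at this
      have h4 : (u * y) ^ 2 = ε ^ 2 / 4 := by
        rw [hu]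
        have : |y| ^ 2 = y ^ 2 := sq_abs y
        field_simp
        nlinarith [sq_abs y, abs_pos.mpr hy0]
      nlinarith
    have hy0 : y ≠ 0 := by
      intro hy0
      set u : ℝ := ε / (2 * |x|) with hu
      have hupos : 0 < u := by positivity
      have := keysq (Real.log u)
      rw [hy0] at this
      rw [Real.exp_log hupos] at this
      have h4 : (u * x) ^ 2 = ε ^ 2 / 4 := by
        rw [hu]
        field_simp
        nlinarith [sq_abs x, abs_pos.mpr hx0]
      nlinarith
    -- main case: choose t with e^{2t} = |y|/|x|
    set s : ℝ := |y| / |x| with hs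
    have hspos : 0 < s := by
      have := abs_pos.mpr hx0
      have := abs_pos.mpr hy0
      positivity
    set t : ℝ := Real.log s / 2 with ht
    have htt : t + t = Real.log s := by rw [ht]; ring
    have he2t : Real.exp t ^ 2 = s := by
      rw [sq, ← Real.exp_add, htt, Real.exp_log hspos]
    have he2t' : Real.exp (-t) ^ 2 = s⁻¹ := by
      have : -t + -t = -Real.log s := by rw [ht]; ring
      rw [sq, ← Real.exp_add, this, Real.exp_neg, Real.exp_log hspos]
    have hk := keysq t
    have hval : (Real.exp t * x) ^ 2 + (Real.exp (-t) * y) ^ 2 = 2 * |x * y| := by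
      have h5 : (Real.exp t * x) ^ 2 = s * x ^ 2 := by rw [mul_pow, he2t]
      have h6 : (Real.exp (-t) * y) ^ 2 = s⁻¹ * y ^ 2 := by rw [mul_pow, he2t']
      rw [h5, h6, hs, abs_mul]
      have hax : 0 < |x| := abs_pos.mpr hx0
      have hay : 0 < |y| := abs_pos.mpr hy0
      field_simp
      nlinarith [sq_abs x, sq_abs y]
    rw [hval] at hk
    linarith
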